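/- Comparison theorem. Let γ ⊂ ℝ^d be locally finite, let 0 < 𝔞₋ < 𝔞₊, let T > 0, let z ∈ l¹_{𝔞₋}, and let Q = (Q_{x,y})_{x,y∈γ} be a matrix with Q_{x,y} ≥ 0 for all x, y, such that the map z ↦ Qz, (Qz)_x = ∑_{y∈γ} Q_{x,y} z_y, is an Ovsjannikov map of order q < 1 and constant L > 0 on the scale {l¹_𝔞}_{𝔞∈[𝔞₋,𝔞₊]}. Let f be the unique solution of f(t) = z + ∫₀ᵗ Q(f(s)) ds that is continuous from [0,T] into l¹_𝔞 for every 𝔞 ∈ (𝔞₋, 𝔞₊). Suppose g : [0,T] → l¹_{𝔞₋} is continuous and satisfies, for every x ∈ γ and t ∈ [0,T], g_x(t) ≤ z_x + ∑_{y∈γ} Q_{x,y} ∫₀ᵗ g_y(s) ds. Then g_x(t) ≤ f_x(t) for all x ∈ γ and all t ∈ [0,T]. -/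

import Mathlib

open Set Filter Metric MeasureTheory

lemma factorial_lower_bound_aux (n : ℕ) : ((n:ℝ)/3)^n ≤ n.factorial := by
  induction n with
  | zero => simp
  | succ n ih =>
    have h1 : ((n:ℝ)+1)^n ≤ 3 * (n:ℝ)^n := by
      rcases Nat.eq_zero_or_pos n with h|h
      · subst h; norm_num
      · have hn0 : (0:ℝ) < n := by exact_mod_cast h
        have h2 : ((n:ℝ)+1) ≤ (n:ℝ) * Real.exp (1/(n:ℝ)) := by
          have h2' := Real.add_one_le_exp (1/(n:ℝ))
          calc (n:ℝ)+1 = (n:ℝ)*(1/(n:ℝ) + 1) := by field_simp; ring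
            _ ≤ (n:ℝ) * Real.exp (1/(n:ℝ)) := mul_le_mul_of_nonneg_left h2' hn0.le
        have h3 : ((n:ℝ)+1)^n ≤ ((n:ℝ) * Real.exp (1/(n:ℝ)))^n :=
          pow_le_pow_left₀ (by positivity) h2 n
        have h4 : ((n:ℝ) * Real.exp (1/(n:ℝ)))^n = (n:ℝ)^n * Real.exp 1 := by
          rw [mul_pow, ← Real.exp_nat_mul]
          congr 2
          field_simp
        have h5 : Real.exp 1 ≤ 3 := by
          have := Real.exp_one_lt_d9; norm_num at this ⊢; linarith
        rw [h4] at h3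
        nlinarith [pow_nonneg hn0.le n]
    have e1 : (((n:ℝ)+1)/3)^n = ((n:ℝ)+1)^n / 3^n := div_pow _ _ _
    have e2 : ((n:ℝ)/3)^n = (n:ℝ)^n / 3^n := div_pow _ _ _
    have h3p : (0:ℝ) < 3^n := by positivity
    have h6 : (((n:ℝ)+1)/3)^n ≤ 3 * (n.factorial : ℝ) := by
      rw [e1]
      calc ((n:ℝ)+1)^n / 3^n ≤ 3*(n:ℝ)^n / 3^n := by gcongr
        _ = 3 * ((n:ℝ)^n/3^n) := by ring
        _ = 3 * ((n:ℝ)/3)^n := by rw [e2]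
        _ ≤ 3 * n.factorial := by gcongr
    have final : (((n:ℝ)+1)/3)^(n+1) ≤ ((n:ℝ)+1) * n.factorial := by
      rw [pow_succ]
      calc (((n:ℝ)+1)/3)^n * (((n:ℝ)+1)/3) ≤ (3*(n.factorial:ℝ)) * (((n:ℝ)+1)/3) :=
            mul_le_mul_of_nonneg_right h6 (by positivity)
        _ = ((n:ℝ)+1) * n.factorial := by ring
    rw [Nat.factorial_succ]
    push_cast
    exact final

lemma ovs_tendsto_zero_aux (M L T Δ q : ℝ) (hM : 0 ≤ M) (hL : 0 < L) (hT : 0 < T)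
    (hΔ : 0 < Δ) (hq0 : 0 ≤ q) (hq1 : q < 1) :
    Tendsto (fun n : ℕ => M * (L / (Δ / n) ^ q) ^ n * T ^ n / n.factorial)
      atTop (nhds 0) := by
  set K := 3*L*T/Δ^q with hK
  have hΔq : (0:ℝ) < Δ^q := Real.rpow_pos_of_pos hΔ q
  have hKpos : 0 < K := div_pos (by positivity) hΔq
  have hlim : Tendsto (fun n : ℕ => (n:ℝ)^(q-1)) atTop (nhds 0) := by
    have h := (tendsto_rpow_neg_atTop (y := 1-q) (by linarith)).comp
      (tendsto_natCast_atTop_atTop (R := ℝ))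
    simpa [Function.comp_def, neg_sub] using h
  have hev : ∀ᶠ n : ℕ in atTop, K * (n:ℝ)^(q-1) ≤ 1/2 := by
    have h2 : Tendsto (fun n : ℕ => K * (n:ℝ)^(q-1)) atTop (nhds 0) := by
      simpa using hlim.const_mul K
    filter_upwards [h2.eventually (gt_mem_nhds (by norm_num : (0:ℝ) < 1/2))] with n hn
    exact hn.le
  have hbound : ∀ᶠ n : ℕ in atTop,
      M * (L / (Δ / n) ^ q) ^ n * T ^ n / n.factorial ≤ M * (1/2)^n := by
    filter_upwards [hev, eventually_ge_atTop 1] with n hKn hn1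
    have hn0 : (0:ℝ) < n := by exact_mod_cast hn1
    have hdr : (Δ / (n:ℝ))^q = Δ^q / (n:ℝ)^q := Real.div_rpow hΔ.le (Nat.cast_nonneg n) q
    set A := L / (Δ / (n:ℝ))^q with hA
    have hA0 : 0 ≤ A := div_nonneg hL.le (Real.rpow_nonneg (by positivity) q)
    have hfact : ((n:ℝ)/3)^n ≤ n.factorial := factorial_lower_bound_aux n
    have hfp : (0:ℝ) < ((n:ℝ)/3)^n := by positivity
    have hX : (0:ℝ) ≤ M * A^n * T^n := by positivity
    have h3 : M * A^n * T^n / n.factorial ≤ M * A^n * T^n / ((n:ℝ)/3)^n := by gcongr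
    have h4 : M * A^n * T^n / ((n:ℝ)/3)^n = M * (A * T * (3/(n:ℝ)))^n := by
      rw [show (3:ℝ)/n = ((n:ℝ)/3)⁻¹ by rw [inv_div], mul_pow, mul_pow, inv_pow]
      ring
    have h5 : A * T * (3/(n:ℝ)) = K * (n:ℝ)^(q-1) := by
      have e0 : (n:ℝ)^(q-1) = (n:ℝ)^q / (n:ℝ) := by
        rw [Real.rpow_sub hn0, Real.rpow_one]
      have hnq : (0:ℝ) < (n:ℝ)^q := Real.rpow_pos_of_pos hn0 q
      rw [hA, hdr, e0, hK]
      field_simp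
    have h6 : (A * T * (3/(n:ℝ)))^n ≤ (1/2)^n := by
      refine pow_le_pow_left₀ ?_ ?_ n
      · rw [h5]; exact mul_nonneg hKpos.le (Real.rpow_nonneg hn0.le _)
      · rw [h5]; exact hKn
    calc M * A^n * T^n / ↑n.factorial ≤ M * A^n * T^n / ((n:ℝ)/3)^n := h3
      _ = M * (A*T*(3/(n:ℝ)))^n := h4
      _ ≤ M * (1/2)^n := mul_le_mul_of_nonneg_left h6 hM
  have hpos : ∀ᶠ n : ℕ in atTop, 0 ≤ M * (L / (Δ / n) ^ q) ^ n * T ^ n / n.factorial := by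
    refine Eventually.of_forall fun n => ?_
    have hA0 : (0:ℝ) ≤ L / (Δ / (n:ℝ))^q :=
      div_nonneg hL.le (Real.rpow_nonneg (by positivity) q)
    exact div_nonneg (mul_nonneg (mul_nonneg hM (pow_nonneg hA0 n)) (pow_nonneg hT.le n))
      (Nat.cast_nonneg _)
  have hhalf : Tendsto (fun n : ℕ => M * (1/2)^n) atTop (nhds 0) := by
    simpa using (tendsto_pow_atTop_nhds_zero_of_lt_one (by norm_num)
      (by norm_num : (1:ℝ)/2 < 1)).const_mul M
  exact squeeze_zero' hpos hbound hhalf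



set_option maxHeartbeats 2000000 in
theorem statement16 (d : ℕ) (γ : Set (EuclideanSpace ℝ (Fin d)))
    (hloc : ∀ K : Set (EuclideanSpace ℝ (Fin d)), IsCompact K → (γ ∩ K).Finite)
    (amin amax : ℝ) (hamin : 0 < amin) (hminmax : amin < amax)
    (T : ℝ) (hT : 0 < T)
    (z : γ → ℝ)
    (hz : Summable (fun x : γ =>
      Real.exp (-amin * ‖(x : EuclideanSpace ℝ (Fin d))‖) * |z x|))
    (Q : γ → γ → ℝ) (hQpos : ∀ x y : γ, 0 ≤ Q x y)
    (q L : ℝ) (hq0 : 0 ≤ q) (hq1 : q < 1) (hL : 0 < L)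
    -- `v ↦ Qv` is an Ovsjannikov map of order `q` and constant `L` on the scale `{l¹_𝔞}`
    (hQovs : ∀ α β : ℝ, amin ≤ α → α < β → β ≤ amax → ∀ v : γ → ℝ,
      Summable (fun x : γ =>
        Real.exp (-α * ‖(x : EuclideanSpace ℝ (Fin d))‖) * |v x|) →
      (∀ x : γ, Summable (fun y : γ => Q x y * v y)) ∧
      Summable (fun x : γ => Real.exp (-β * ‖(x : EuclideanSpace ℝ (Fin d))‖) *
        |∑' y : γ, Q x y * v y|) ∧
      (∑' x : γ, Real.exp (-β * ‖(x : EuclideanSpace ℝ (Fin d))‖) *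
          |∑' y : γ, Q x y * v y|) ≤
        L / (β - α) ^ q *
          ∑' x : γ, Real.exp (-α * ‖(x : EuclideanSpace ℝ (Fin d))‖) * |v x|)
    -- `f` is the solution of `f(t) = z + ∫₀ᵗ Q(f(s)) ds`, continuous into `l¹_𝔞`
    -- for every `𝔞 ∈ (𝔞₋, 𝔞₊)`
    (f : ℝ → γ → ℝ)
    (hfmem : ∀ a : ℝ, amin < a → a < amax → ∀ t ∈ Icc (0 : ℝ) T,
      Summable (fun x : γ =>
        Real.exp (-a * ‖(x : EuclideanSpace ℝ (Fin d))‖) * |f t x|))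
    (hfcont : ∀ a : ℝ, amin < a → a < amax → ∀ t₀ ∈ Icc (0 : ℝ) T,
      Tendsto (fun t => ∑' x : γ,
          Real.exp (-a * ‖(x : EuclideanSpace ℝ (Fin d))‖) * |f t x - f t₀ x|)
        (nhdsWithin t₀ (Icc (0 : ℝ) T)) (nhds 0))
    (hfeq : ∀ t ∈ Icc (0 : ℝ) T, ∀ x : γ,
      f t x = z x + ∫ s in (0 : ℝ)..t, ∑' y : γ, Q x y * f s y)
    -- `g` is continuous into `l¹_{𝔞₋}` and satisfies the componentwise inequality
    (g : ℝ → γ → ℝ)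
    (hgmem : ∀ t ∈ Icc (0 : ℝ) T,
      Summable (fun x : γ =>
        Real.exp (-amin * ‖(x : EuclideanSpace ℝ (Fin d))‖) * |g t x|))
    (hgcont : ∀ t₀ ∈ Icc (0 : ℝ) T,
      Tendsto (fun t => ∑' x : γ,
          Real.exp (-amin * ‖(x : EuclideanSpace ℝ (Fin d))‖) * |g t x - g t₀ x|)
        (nhdsWithin t₀ (Icc (0 : ℝ) T)) (nhds 0))
    (hgineq : ∀ x : γ, ∀ t ∈ Icc (0 : ℝ) T,
      g t x ≤ z x + ∑' y : γ, Q x y * ∫ s in (0 : ℝ)..t, g s y) :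
    ∀ x : γ, ∀ t ∈ Icc (0 : ℝ) T, g t x ≤ f t x := by

  -- γ is countable
  have hcount : Countable γ := by
    have hsub : γ ⊆ ⋃ n : ℕ, (γ ∩ Metric.closedBall 0 n) := by
      intro p hp
      simp only [Set.mem_iUnion, Set.mem_inter_iff, Metric.mem_closedBall, dist_zero_right]
      exact ⟨⌈‖p‖⌉₊, hp, Nat.le_ceil _⟩
    have hcnt : γ.Countable :=
      (Set.countable_iUnion (fun n : ℕ =>
        (hloc _ (isCompact_closedBall _ _)).countable)).mono hsub
    exact hcnt.to_subtype
  have hT0 : (0:ℝ) ≤ T := hT.le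
  set ω : ℝ → γ → ℝ := fun a x => Real.exp (-a * ‖(x : EuclideanSpace ℝ (Fin d))‖) with hωdef
  have hωpos : ∀ (a : ℝ) (x : γ), 0 < ω a x := fun a x => Real.exp_pos _
  have hωmono : ∀ {a b : ℝ}, a ≤ b → ∀ x : γ, ω b x ≤ ω a x := by
    intro a b hab x
    have h0 : (0:ℝ) ≤ ‖(x : EuclideanSpace ℝ (Fin d))‖ := norm_nonneg _
    exact Real.exp_le_exp.2 (by nlinarith)
  set a₀ : ℝ := amin + (amax - amin)/3 with ha₀def
  set a₁ : ℝ := amin + 2*(amax - amin)/3 with ha₁def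
  have hd : 0 < amax - amin := by linarith
  have ha₀l : amin < a₀ := by simp only [ha₀def]; linarith
  have ha₀u : a₀ < amax := by simp only [ha₀def]; linarith
  have ha01 : a₀ < a₁ := by simp only [ha₀def, ha₁def]; linarith
  have ha₁u : a₁ < amax := by simp only [ha₁def]; linarith
  -- generic: pointwise continuity and norm boundedness from l¹-continuity
  have hgen : ∀ (a : ℝ) (h : ℝ → γ → ℝ),
      (∀ t ∈ Icc (0:ℝ) T, Summable (fun y : γ => ω a y * |h t y|)) →
      (∀ t₀ ∈ Icc (0:ℝ) T, Tendsto (fun t => ∑' y : γ, ω a y * |h t y - h t₀ y|)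
        (nhdsWithin t₀ (Icc (0:ℝ) T)) (nhds 0)) →
      (∀ x : γ, ContinuousOn (fun s => h s x) (Icc 0 T)) ∧
      (∃ M : ℝ, 0 ≤ M ∧ ∀ t ∈ Icc (0:ℝ) T, (∑' y : γ, ω a y * |h t y|) ≤ M) := by
    intro a h hmem hcont
    have hdsum : ∀ t ∈ Icc (0:ℝ) T, ∀ t₀ ∈ Icc (0:ℝ) T,
        Summable (fun y : γ => ω a y * |h t y - h t₀ y|) := by
      intro t ht t₀ ht₀
      refine Summable.of_nonneg_of_le (fun y => mul_nonneg (hωpos _ _).le (abs_nonneg _))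
        (fun y => ?_) ((hmem t ht).add (hmem t₀ ht₀))
      have h1 : |h t y - h t₀ y| ≤ |h t y| + |h t₀ y| := abs_sub _ _
      calc ω a y * |h t y - h t₀ y| ≤ ω a y * (|h t y| + |h t₀ y|) :=
            mul_le_mul_of_nonneg_left h1 (hωpos _ _).le
        _ = ω a y * |h t y| + ω a y * |h t₀ y| := mul_add _ _ _
    constructor
    · intro x t₀ ht₀
      rw [ContinuousWithinAt, tendsto_iff_dist_tendsto_zero]
      have hbound : ∀ᶠ t in nhdsWithin t₀ (Icc (0:ℝ) T),
          dist (h t x) (h t₀ x) ≤ (ω a x)⁻¹ * ∑' y : γ, ω a y * |h t y - h t₀ y| := by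
        filter_upwards [eventually_mem_nhdsWithin] with t ht
        have h1 : ω a x * |h t x - h t₀ x| ≤ ∑' y : γ, ω a y * |h t y - h t₀ y| :=
          Summable.le_tsum (hdsum t ht t₀ ht₀) x (fun y _ => mul_nonneg (hωpos _ _).le (abs_nonneg _))
        rw [Real.dist_eq, ← le_div_iff₀' (hωpos a x), div_eq_inv_mul] at *
        exact h1
      refine squeeze_zero' (Eventually.of_forall fun t => dist_nonneg) hbound ?_
      simpa only [mul_zero] using (hcont t₀ ht₀).const_mul ((ω a x)⁻¹)
    · have hNC : ContinuousOn (fun t => ∑' y : γ, ω a y * |h t y|) (Icc 0 T) := by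
        intro t₀ ht₀
        rw [ContinuousWithinAt, tendsto_iff_dist_tendsto_zero]
        have hbound : ∀ᶠ t in nhdsWithin t₀ (Icc (0:ℝ) T),
            dist (∑' y : γ, ω a y * |h t y|) (∑' y : γ, ω a y * |h t₀ y|)
              ≤ ∑' y : γ, ω a y * |h t y - h t₀ y| := by
          filter_upwards [eventually_mem_nhdsWithin] with t ht
          have key : ∀ (u v : ℝ → γ → ℝ) (hu : u = h) (hv : v = h) (s s' : ℝ)
              (hs : s ∈ Icc (0:ℝ) T) (hs' : s' ∈ Icc (0:ℝ) T),
              (∑' y : γ, ω a y * |h s y|) - (∑' y : γ, ω a y * |h s' y|)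
                ≤ ∑' y : γ, ω a y * |h s y - h s' y| := by
            intro u v hu hv s s' hs hs'
            have hle : ∀ y : γ, ω a y * |h s y| ≤
                ω a y * |h s' y| + ω a y * |h s y - h s' y| := by
              intro y
              have : |h s y| ≤ |h s' y| + |h s y - h s' y| := by
                calc |h s y| = |h s' y + (h s y - h s' y)| := by ring_nf
                  _ ≤ |h s' y| + |h s y - h s' y| := abs_add_le _ _
              calc ω a y * |h s y| ≤ ω a y * (|h s' y| + |h s y - h s' y|) :=
                    mul_le_mul_of_nonneg_left this (hωpos _ _).le
                _ = _ := mul_add _ _ _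
            have := Summable.tsum_le_tsum hle (hmem s hs) ((hmem s' hs').add (hdsum s hs s' hs'))
            rw [Summable.tsum_add (hmem s' hs') (hdsum s hs s' hs')] at this
            have heq : (∑' y : γ, ω a y * |h s y - h s' y|)
                = ∑' y : γ, ω a y * |h s' y - h s y| := by
              congr 1; funext y; rw [abs_sub_comm]
            linarith [heq ▸ this]
          have h1 := key h h rfl rfl t t₀ ht ht₀
          have h2 := key h h rfl rfl t₀ t ht₀ ht
          have heq : (∑' y : γ, ω a y * |h t₀ y - h t y|)
              = ∑' y : γ, ω a y * |h t y - h t₀ y| := by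
            congr 1; funext y; rw [abs_sub_comm]
          rw [Real.dist_eq, abs_le]
          constructor <;> [linarith [heq ▸ h2]; linarith]
        exact squeeze_zero' (Eventually.of_forall fun t => dist_nonneg) hbound (hcont t₀ ht₀)
      have hbdd := (isCompact_Icc (a := (0:ℝ)) (b := T)).bddAbove_image hNC
      obtain ⟨M, hM⟩ := hbdd
      refine ⟨max M 0, le_max_right _ _, fun t ht => ?_⟩
      exact le_trans (hM (Set.mem_image_of_mem _ ht)) (le_max_left _ _)
  have hgC : ∀ x : γ, ContinuousOn (fun s => g s x) (Icc 0 T) := by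
    intro x t₀ ht₀
    rw [ContinuousWithinAt, tendsto_iff_dist_tendsto_zero]
    have hev : ∀ᶠ t in nhdsWithin t₀ (Icc (0:ℝ) T), t ∈ Icc (0:ℝ) T :=
      eventually_mem_nhdsWithin
    have hbound : ∀ᶠ t in nhdsWithin t₀ (Icc (0:ℝ) T),
        dist (g t x) (g t₀ x) ≤ (ω amin x)⁻¹ * ∑' y : γ, ω amin y * |g t y - g t₀ y| := by
      filter_upwards [hev] with t ht
      have hsum : Summable (fun y : γ => ω amin y * |g t y - g t₀ y|) := by
        refine Summable.of_nonneg_of_le (fun y => mul_nonneg (hωpos _ _).le (abs_nonneg _))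
          (fun y => ?_) ((hgmem t ht).add (hgmem t₀ ht₀))
        have h1 : |g t y - g t₀ y| ≤ |g t y| + |g t₀ y| := abs_sub _ _
        calc ω amin y * |g t y - g t₀ y| ≤ ω amin y * (|g t y| + |g t₀ y|) :=
              mul_le_mul_of_nonneg_left h1 (hωpos _ _).le
          _ = ω amin y * |g t y| + ω amin y * |g t₀ y| := mul_add _ _ _
      have h1 : ω amin x * |g t x - g t₀ x| ≤ ∑' y : γ, ω amin y * |g t y - g t₀ y| :=
        Summable.le_tsum hsum x (fun y _ => mul_nonneg (hωpos _ _).le (abs_nonneg _))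
      rw [Real.dist_eq, ← le_div_iff₀' (hωpos amin x), div_eq_inv_mul] at *
      exact h1
    refine squeeze_zero' (Eventually.of_forall fun t => dist_nonneg) hbound ?_
    simpa only [hωdef, mul_zero] using (hgcont t₀ ht₀).const_mul ((ω amin x)⁻¹)
  obtain ⟨hgC, Mg, hMg0, hMg⟩ := hgen amin g hgmem hgcont
  obtain ⟨hfC, Mf, hMf0, hMf⟩ := hgen a₀ f (fun t ht => hfmem a₀ ha₀l ha₀u t ht)
    (fun t₀ ht₀ => hfcont a₀ ha₀l ha₀u t₀ ht₀)
  -- the positive part of g - f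
  set u : ℝ → γ → ℝ := fun s x => max (g s x - f s x) 0 with hudef
  have hu0 : ∀ (s : ℝ) (x : γ), 0 ≤ u s x := fun s x => le_max_right _ _
  have huC : ∀ x : γ, ContinuousOn (fun s => u s x) (Icc 0 T) :=
    fun x s hs => (((hgC x).sub (hfC x)) s hs).max (continuousWithinAt_const)
  have hIccsub : ∀ {t : ℝ}, t ∈ Icc (0:ℝ) T → Icc (0:ℝ) t ⊆ Icc (0:ℝ) T :=
    fun ht => Icc_subset_Icc le_rfl ht.2
  have hIocsub : ∀ {t : ℝ}, t ∈ Icc (0:ℝ) T → Ioc (0:ℝ) t ⊆ Icc (0:ℝ) T :=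
    fun ht => le_trans Ioc_subset_Icc_self (hIccsub ht)
  -- integrability of componentwise continuous functions on Ioc 0 t
  have hInt : ∀ (h : ℝ → γ → ℝ), (∀ x : γ, ContinuousOn (fun s => h s x) (Icc 0 T)) →
      ∀ (y : γ), ∀ t ∈ Icc (0:ℝ) T, IntegrableOn (fun s => h s y) (Ioc 0 t) volume :=
    fun h hC y t ht =>
      (((hC y).mono (hIccsub ht)).integrableOn_Icc).mono_set Ioc_subset_Icc_self
  set W : ℝ → γ → ℝ := fun t y => ∫ s in Ioc (0:ℝ) t, u s y with hWdef
  set Vg : ℝ → γ → ℝ := fun t y => ∫ s in Ioc (0:ℝ) t, |g s y| with hVgdef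
  set Vf : ℝ → γ → ℝ := fun t y => ∫ s in Ioc (0:ℝ) t, |f s y| with hVfdef
  have hW0 : ∀ (t : ℝ) (y : γ), 0 ≤ W t y :=
    fun t y => setIntegral_nonneg measurableSet_Ioc (fun s _ => hu0 s y)
  have hVg0 : ∀ (t : ℝ) (y : γ), 0 ≤ Vg t y :=
    fun t y => setIntegral_nonneg measurableSet_Ioc (fun s _ => abs_nonneg _)
  have hVf0 : ∀ (t : ℝ) (y : γ), 0 ≤ Vf t y :=
    fun t y => setIntegral_nonneg measurableSet_Ioc (fun s _ => abs_nonneg _)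
  have hWle : ∀ t ∈ Icc (0:ℝ) T, ∀ (y : γ), W t y ≤ Vg t y + Vf t y := by
    intro t ht y
    have h1 : IntegrableOn (fun s => |g s y| + |f s y|) (Ioc 0 t) volume :=
      ((hInt g hgC y t ht).abs).add ((hInt f hfC y t ht).abs)
    have h2 : ∀ s ∈ Ioc (0:ℝ) t, u s y ≤ |g s y| + |f s y| := by
      intro s _
      refine max_le ?_ (by positivity)
      have h3 : g s y ≤ |g s y| := le_abs_self _
      have h4 : -f s y ≤ |f s y| := neg_le_abs _
      linarith
    have h5 : W t y ≤ ∫ s in Ioc (0:ℝ) t, (|g s y| + |f s y|) :=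
      setIntegral_mono_on (hInt u huC y t ht) h1 measurableSet_Ioc h2
    have h6 : (∫ s in Ioc (0:ℝ) t, (|g s y| + |f s y|)) = Vg t y + Vf t y :=
      integral_add ((hInt g hgC y t ht).abs) ((hInt f hfC y t ht).abs)
    linarith
  -- summability of time-integrated norms, via the ENNReal detour
  have hSV : ∀ (a : ℝ) (h : ℝ → γ → ℝ) (M : ℝ),
      (∀ x : γ, ContinuousOn (fun s => h s x) (Icc 0 T)) →
      (∀ t ∈ Icc (0:ℝ) T, Summable (fun y : γ => ω a y * |h t y|)) →
      (∀ t ∈ Icc (0:ℝ) T, (∑' y : γ, ω a y * |h t y|) ≤ M) →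
      ∀ t ∈ Icc (0:ℝ) T, Summable (fun y : γ => ω a y * ∫ s in Ioc (0:ℝ) t, |h s y|) := by
    intro a h M hC hmem hMle t ht
    have hint : ∀ y : γ, Integrable (fun s => ω a y * |h s y|)
        (volume.restrict (Ioc (0:ℝ) t)) := fun y =>
      (((hInt h hC y t ht).abs).const_mul _)
    have hkey : ∀ y : γ, ENNReal.ofReal (ω a y * ∫ s in Ioc (0:ℝ) t, |h s y|)
        = ∫⁻ s in Ioc (0:ℝ) t, ENNReal.ofReal (ω a y * |h s y|) := by
      intro y
      rw [← integral_const_mul]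
      exact ofReal_integral_eq_lintegral_ofReal (hint y)
        (Eventually.of_forall fun s => mul_nonneg (hωpos _ _).le (abs_nonneg _))
    have hmeas : ∀ y : γ, AEMeasurable (fun s => ENNReal.ofReal (ω a y * |h s y|))
        (volume.restrict (Ioc (0:ℝ) t)) := fun y =>
      ((((hC y).mono (hIccsub ht)).abs.aemeasurable measurableSet_Icc).mono_measure
          (Measure.restrict_mono Ioc_subset_Icc_self le_rfl)).const_mul
        (ω a y) |>.ennreal_ofReal
    have hfin : (∑' y : γ, ENNReal.ofReal (ω a y * ∫ s in Ioc (0:ℝ) t, |h s y|)) ≠ ⊤ := by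
      have h1 : (∑' y : γ, ENNReal.ofReal (ω a y * ∫ s in Ioc (0:ℝ) t, |h s y|))
          = ∫⁻ s in Ioc (0:ℝ) t, ∑' y : γ, ENNReal.ofReal (ω a y * |h s y|) := by
        simp_rw [hkey]
        exact (lintegral_tsum hmeas).symm
      rw [h1]
      have h2 : (∫⁻ s in Ioc (0:ℝ) t, ∑' y : γ, ENNReal.ofReal (ω a y * |h s y|))
          ≤ ∫⁻ _ in Ioc (0:ℝ) t, ENNReal.ofReal M := by
        refine lintegral_mono_ae ?_
        filter_upwards [ae_restrict_mem measurableSet_Ioc] with s hs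
        rw [← ENNReal.ofReal_tsum_of_nonneg
          (fun y => mul_nonneg (hωpos _ _).le (abs_nonneg _)) (hmem s (hIocsub ht hs))]
        exact ENNReal.ofReal_le_ofReal (hMle s (hIocsub ht hs))
      refine ne_top_of_le_ne_top ?_ h2
      rw [setLIntegral_const]
      exact ENNReal.mul_ne_top ENNReal.ofReal_ne_top (by simp)
    have := ENNReal.summable_toReal hfin
    refine this.congr fun y => ?_
    exact ENNReal.toReal_ofReal (mul_nonneg (hωpos _ _).le
      (setIntegral_nonneg measurableSet_Ioc fun s _ => abs_nonneg _))
  have hSVg : ∀ t ∈ Icc (0:ℝ) T, Summable (fun y : γ => ω amin y * Vg t y) :=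
    hSV amin g Mg hgC hgmem hMg
  have hSVf : ∀ t ∈ Icc (0:ℝ) T, Summable (fun y : γ => ω a₀ y * Vf t y) :=
    hSV a₀ f Mf hfC (fun t ht => hfmem a₀ ha₀l ha₀u t ht) hMf
  have hSVga : ∀ t ∈ Icc (0:ℝ) T, Summable (fun y : γ => ω a₀ y * Vg t y) := by
    intro t ht
    refine Summable.of_nonneg_of_le (fun y => mul_nonneg (hωpos _ _).le (hVg0 t y))
      (fun y => mul_le_mul_of_nonneg_right (hωmono ha₀l.le y) (hVg0 t y)) (hSVg t ht)
  -- summability of the weighted W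
  have hSW : ∀ (α : ℝ), a₀ ≤ α → ∀ t ∈ Icc (0:ℝ) T,
      Summable (fun y : γ => ω α y * |W t y|) := by
    intro α hα t ht
    refine Summable.of_nonneg_of_le (fun y => mul_nonneg (hωpos _ _).le (abs_nonneg _))
      (fun y => ?_) ((hSVga t ht).add (hSVf t ht))
    rw [abs_of_nonneg (hW0 t y)]
    calc ω α y * W t y ≤ ω a₀ y * W t y :=
          mul_le_mul_of_nonneg_right (hωmono hα y) (hW0 t y)
      _ ≤ ω a₀ y * (Vg t y + Vf t y) :=
          mul_le_mul_of_nonneg_left (hWle t ht y) (hωpos _ _).le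
      _ = ω a₀ y * Vg t y + ω a₀ y * Vf t y := mul_add _ _ _
  have hrp01 : (0:ℝ) < (a₁ - a₀) ^ q := Real.rpow_pos_of_pos (by linarith) q
  -- uniform bound for Q applied to |f s|
  have hQf_bound : ∀ x : γ, ∀ s ∈ Icc (0:ℝ) T,
      (∑' y : γ, Q x y * |f s y|) ≤ (ω a₁ x)⁻¹ * (L / (a₁ - a₀) ^ q * Mf) := by
    intro x s hs
    have hsum : Summable (fun y : γ => ω a₀ y * |(|f s y|)|) := by
      simpa only [abs_abs] using hfmem a₀ ha₀l ha₀u s hs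
    obtain ⟨h1, h2, h3⟩ := hQovs a₀ a₁ ha₀l.le ha01 ha₁u.le (fun y => |f s y|) hsum
    have h4 : ω a₁ x * abs (∑' y : γ, Q x y * |f s y|)
        ≤ ∑' x' : γ, ω a₁ x' * abs (∑' y : γ, Q x' y * |f s y|) :=
      Summable.le_tsum h2 x (fun j _ => mul_nonneg (hωpos _ _).le (abs_nonneg _))
    have h5 : (∑' x' : γ, ω a₀ x' * |(|f s x'|)|) ≤ Mf := by
      simpa only [abs_abs] using hMf s hs
    have h6 : (0:ℝ) ≤ ∑' y : γ, Q x y * |f s y| :=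
      tsum_nonneg fun y => mul_nonneg (hQpos x y) (abs_nonneg _)
    rw [abs_of_nonneg h6] at h4
    have h7 : L / (a₁ - a₀) ^ q * (∑' x' : γ, ω a₀ x' * |(|f s x'|)|)
        ≤ L / (a₁ - a₀) ^ q * Mf :=
      mul_le_mul_of_nonneg_left h5 (div_nonneg hL.le hrp01.le)
    have h8 := le_trans h4 (le_trans h3 h7)
    rw [inv_mul_eq_div, le_div_iff₀ (hωpos a₁ x), mul_comm]
    exact h8
  -- Fubini swap for the f-equation
  have hswapf : ∀ t ∈ Icc (0:ℝ) T, ∀ x : γ,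
      (∫ s in Ioc (0:ℝ) t, ∑' y : γ, Q x y * f s y)
        = ∑' y : γ, Q x y * ∫ s in Ioc (0:ℝ) t, f s y := by
    intro t ht x
    have hmeas : ∀ y : γ, AEStronglyMeasurable (fun s => Q x y * f s y)
        (volume.restrict (Ioc (0:ℝ) t)) := fun y =>
      (((hfC y).mono (hIocsub ht)).aestronglyMeasurable measurableSet_Ioc).const_mul _
    have hbd : (∫⁻ s in Ioc (0:ℝ) t, ∑' y : γ, (‖Q x y * f s y‖₊ : ENNReal))
        ≤ ∫⁻ s in Ioc (0:ℝ) t, ENNReal.ofReal ((ω a₁ x)⁻¹ * (L / (a₁ - a₀) ^ q * Mf)) := by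
      refine lintegral_mono_ae ?_
      filter_upwards [ae_restrict_mem measurableSet_Ioc] with s hs
      have hs' : s ∈ Icc (0:ℝ) T := hIocsub ht hs
      have hsum : Summable (fun y : γ => Q x y * |f s y|) := by
        have h0 : Summable (fun y : γ => ω a₀ y * |(|f s y|)|) := by
          simpa only [abs_abs] using hfmem a₀ ha₀l ha₀u s hs'
        exact (hQovs a₀ a₁ ha₀l.le ha01 ha₁u.le (fun y => |f s y|) h0).1 x
      have heq : ∀ y : γ, (‖Q x y * f s y‖₊ : ENNReal) = ENNReal.ofReal (Q x y * |f s y|) := by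
        intro y
        rw [← enorm_eq_nnnorm, Real.enorm_eq_ofReal_abs, abs_mul, abs_of_nonneg (hQpos x y)]
      calc (∑' y : γ, (‖Q x y * f s y‖₊ : ENNReal))
          = ∑' y : γ, ENNReal.ofReal (Q x y * |f s y|) := by simp_rw [heq]
        _ = ENNReal.ofReal (∑' y : γ, Q x y * |f s y|) :=
            (ENNReal.ofReal_tsum_of_nonneg
              (fun y => mul_nonneg (hQpos x y) (abs_nonneg _)) hsum).symm
        _ ≤ _ := ENNReal.ofReal_le_ofReal (hQf_bound x s hs')
    have hfin : (∑' y : γ, ∫⁻ s in Ioc (0:ℝ) t, (‖Q x y * f s y‖₊ : ENNReal)) ≠ ⊤ := by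
      rw [show (∑' y : γ, ∫⁻ s in Ioc (0:ℝ) t, (‖Q x y * f s y‖₊ : ENNReal)) = ∑' y : γ, ∫⁻ s in Ioc (0:ℝ) t, ‖Q x y * f s y‖ₑ from rfl,
        ← lintegral_tsum (fun y => (hmeas y).enorm)]
      refine ne_top_of_le_ne_top ?_ hbd
      rw [setLIntegral_const]
      exact ENNReal.mul_ne_top ENNReal.ofReal_ne_top (by simp)
    rw [integral_tsum hmeas hfin]
    exact tsum_congr fun y => integral_const_mul _ _
  -- summability of Q applied to the integrated quantities
  have hQVg : ∀ x : γ, ∀ t ∈ Icc (0:ℝ) T, Summable (fun y : γ => Q x y * Vg t y) := by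
    intro x t ht
    have h0 : Summable (fun y : γ => ω amin y * |Vg t y|) :=
      (hSVg t ht).congr (fun y => by rw [abs_of_nonneg (hVg0 t y)])
    exact (hQovs amin amax le_rfl hminmax le_rfl (Vg t) h0).1 x
  have hQVf : ∀ x : γ, ∀ t ∈ Icc (0:ℝ) T, Summable (fun y : γ => Q x y * Vf t y) := by
    intro x t ht
    have h0 : Summable (fun y : γ => ω a₀ y * |Vf t y|) :=
      (hSVf t ht).congr (fun y => by rw [abs_of_nonneg (hVf0 t y)])
    exact (hQovs a₀ amax ha₀l.le ha₀u le_rfl (Vf t) h0).1 x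
  have habsint : ∀ (h : ℝ → γ → ℝ), (∀ x : γ, ContinuousOn (fun s => h s x) (Icc 0 T)) →
      ∀ (y : γ) (t : ℝ), |∫ s in Ioc (0:ℝ) t, h s y| ≤ ∫ s in Ioc (0:ℝ) t, |h s y| := by
    intro h hC y t
    simpa only [Real.norm_eq_abs] using
      norm_integral_le_integral_norm (μ := volume.restrict (Ioc (0:ℝ) t)) (fun s => h s y)
  have hQg : ∀ x : γ, ∀ t ∈ Icc (0:ℝ) T,
      Summable (fun y : γ => Q x y * ∫ s in Ioc (0:ℝ) t, g s y) := by
    intro x t ht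
    refine Summable.of_abs (Summable.of_nonneg_of_le (fun y => abs_nonneg _)
      (fun y => ?_) (hQVg x t ht))
    rw [abs_mul, abs_of_nonneg (hQpos x y)]
    exact mul_le_mul_of_nonneg_left (habsint g hgC y t) (hQpos x y)
  have hQf : ∀ x : γ, ∀ t ∈ Icc (0:ℝ) T,
      Summable (fun y : γ => Q x y * ∫ s in Ioc (0:ℝ) t, f s y) := by
    intro x t ht
    refine Summable.of_abs (Summable.of_nonneg_of_le (fun y => abs_nonneg _)
      (fun y => ?_) (hQVf x t ht))
    rw [abs_mul, abs_of_nonneg (hQpos x y)]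
    exact mul_le_mul_of_nonneg_left (habsint f hfC y t) (hQpos x y)
  have hQW : ∀ x : γ, ∀ t ∈ Icc (0:ℝ) T, Summable (fun y : γ => Q x y * W t y) := by
    intro x t ht
    refine Summable.of_nonneg_of_le (fun y => mul_nonneg (hQpos x y) (hW0 t y))
      (fun y => ?_) (((hQVg x t ht).add (hQVf x t ht)).congr (fun y => (mul_add _ _ _).symm))
    exact mul_le_mul_of_nonneg_left (hWle t ht y) (hQpos x y)
  -- Lemma A: the fundamental integral inequality
  have hA : ∀ t ∈ Icc (0:ℝ) T, ∀ x : γ, g t x - f t x ≤ ∑' y : γ, Q x y * W t y := by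
    intro t ht x
    have hg' := hgineq x t ht
    have hf' := hfeq t ht x
    simp only [intervalIntegral.integral_of_le ht.1] at hg' hf'
    rw [hswapf t ht x] at hf'
    have hsubint : ∀ y : γ, Q x y * (∫ s in Ioc (0:ℝ) t, g s y)
        - Q x y * (∫ s in Ioc (0:ℝ) t, f s y)
        = Q x y * ∫ s in Ioc (0:ℝ) t, (g s y - f s y) := by
      intro y
      rw [← mul_sub, ← integral_sub (hInt g hgC y t ht) (hInt f hfC y t ht)]
    have hSd : Summable (fun y : γ => Q x y * ∫ s in Ioc (0:ℝ) t, (g s y - f s y)) :=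
      ((hQg x t ht).sub (hQf x t ht)).congr hsubint
    have hsub : (∑' y : γ, Q x y * ∫ s in Ioc (0:ℝ) t, g s y)
        - (∑' y : γ, Q x y * ∫ s in Ioc (0:ℝ) t, f s y)
        = ∑' y : γ, Q x y * ∫ s in Ioc (0:ℝ) t, (g s y - f s y) := by
      rw [← Summable.tsum_sub (hQg x t ht) (hQf x t ht)]
      exact tsum_congr hsubint
    have hmono : (∑' y : γ, Q x y * ∫ s in Ioc (0:ℝ) t, (g s y - f s y))
        ≤ ∑' y : γ, Q x y * W t y := by
      refine Summable.tsum_le_tsum (fun y => ?_) hSd (hQW x t ht)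
      refine mul_le_mul_of_nonneg_left ?_ (hQpos x y)
      exact setIntegral_mono_on
        ((hInt g hgC y t ht).sub (hInt f hfC y t ht)) (hInt u huC y t ht)
        measurableSet_Ioc (fun s _ => le_max_left _ _)
    linarith
  -- the ENNReal-valued weighted norm of u
  set Fa : ℝ → ℝ → ENNReal := fun a t => ∑' x : γ, ENNReal.ofReal (ω a x * u t x) with hFadef
  -- the integrated norm identity
  have hNW : ∀ (α : ℝ), a₀ ≤ α → ∀ t ∈ Icc (0:ℝ) T,
      ENNReal.ofReal (∑' y : γ, ω α y * W t y) = ∫⁻ s in Ioc (0:ℝ) t, Fa α s := by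
    intro α hα t ht
    have hsum : Summable (fun y : γ => ω α y * W t y) :=
      (hSW α hα t ht).congr (fun y => by rw [abs_of_nonneg (hW0 t y)])
    rw [ENNReal.ofReal_tsum_of_nonneg (fun y => mul_nonneg (hωpos _ _).le (hW0 t y)) hsum]
    have hkey : ∀ y : γ, ENNReal.ofReal (ω α y * W t y)
        = ∫⁻ s in Ioc (0:ℝ) t, ENNReal.ofReal (ω α y * u s y) := by
      intro y
      have he : ω α y * W t y = ∫ s in Ioc (0:ℝ) t, ω α y * u s y :=
        (integral_const_mul _ _).symm
      rw [he]
      exact ofReal_integral_eq_lintegral_ofReal ((hInt u huC y t ht).const_mul _)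
        (Eventually.of_forall fun s => mul_nonneg (hωpos _ _).le (hu0 s y))
    have hmeas : ∀ y : γ, AEMeasurable (fun s => ENNReal.ofReal (ω α y * u s y))
        (volume.restrict (Ioc (0:ℝ) t)) := fun y =>
      ((((huC y).mono (hIccsub ht)).aemeasurable measurableSet_Icc).mono_measure
          (Measure.restrict_mono Ioc_subset_Icc_self le_rfl)).const_mul
        (ω α y) |>.ennreal_ofReal
    calc (∑' y : γ, ENNReal.ofReal (ω α y * W t y))
        = ∑' y : γ, ∫⁻ s in Ioc (0:ℝ) t, ENNReal.ofReal (ω α y * u s y) := by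
          exact tsum_congr hkey
      _ = ∫⁻ s in Ioc (0:ℝ) t, ∑' y : γ, ENNReal.ofReal (ω α y * u s y) :=
          (lintegral_tsum hmeas).symm
  -- the recursion inequality (Lemma B)
  have hB : ∀ α β : ℝ, a₀ ≤ α → α < β → β ≤ a₁ → ∀ t ∈ Icc (0:ℝ) T,
      Fa β t ≤ ENNReal.ofReal (L / (β - α) ^ q) * ∫⁻ s in Ioc (0:ℝ) t, Fa α s := by
    intro α β hα hαβ hβ t ht
    have hWsum : Summable (fun y : γ => ω α y * |W t y|) := hSW α hα t ht
    obtain ⟨h1, h2, h3⟩ := hQovs α β (le_trans ha₀l.le hα) hαβ (le_trans hβ ha₁u.le)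
      (W t) hWsum
    have hptw : ∀ x : γ, u t x ≤ |∑' y : γ, Q x y * W t y| := by
      intro x
      have h4 : (0:ℝ) ≤ ∑' y : γ, Q x y * W t y :=
        tsum_nonneg fun y => mul_nonneg (hQpos x y) (hW0 t y)
      rw [abs_of_nonneg h4]
      exact max_le (hA t ht x) h4
    have hstep : Fa β t
        ≤ ENNReal.ofReal (∑' x : γ, ω β x * |∑' y : γ, Q x y * W t y|) := by
      rw [ENNReal.ofReal_tsum_of_nonneg
        (fun x => mul_nonneg (hωpos _ _).le (abs_nonneg _)) h2]
      refine ENNReal.tsum_le_tsum fun x => ENNReal.ofReal_le_ofReal ?_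
      exact mul_le_mul_of_nonneg_left (hptw x) (hωpos _ _).le
    refine le_trans hstep ?_
    have h6 : (∑' y : γ, ω α y * |W t y|) = ∑' y : γ, ω α y * W t y :=
      tsum_congr fun y => by rw [abs_of_nonneg (hW0 t y)]
    calc ENNReal.ofReal (∑' x : γ, ω β x * |∑' y : γ, Q x y * W t y|)
        ≤ ENNReal.ofReal (L / (β - α)^q * ∑' y : γ, ω α y * W t y) := by
          refine ENNReal.ofReal_le_ofReal ?_
          rw [← h6]
          exact h3
      _ = ENNReal.ofReal (L / (β - α)^q) * ENNReal.ofReal (∑' y : γ, ω α y * W t y) :=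
          ENNReal.ofReal_mul
            (div_nonneg hL.le (Real.rpow_pos_of_pos (by linarith) q).le)
      _ = _ := by rw [hNW α hα t ht]
  -- base bound
  have hbase : ∀ t ∈ Icc (0:ℝ) T, Fa a₀ t ≤ ENNReal.ofReal (Mg + Mf) := by
    intro t ht
    have h1 : ∀ x : γ, ENNReal.ofReal (ω a₀ x * u t x)
        ≤ ENNReal.ofReal (ω amin x * |g t x|) + ENNReal.ofReal (ω a₀ x * |f t x|) := by
      intro x
      rw [← ENNReal.ofReal_add (mul_nonneg (hωpos _ _).le (abs_nonneg _))
        (mul_nonneg (hωpos _ _).le (abs_nonneg _))]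
      refine ENNReal.ofReal_le_ofReal ?_
      have h2 : u t x ≤ |g t x| + |f t x| := by
        refine max_le ?_ (by positivity)
        have h3 : g t x ≤ |g t x| := le_abs_self _
        have h4 : -f t x ≤ |f t x| := neg_le_abs _
        linarith
      have h5 : ω a₀ x * |g t x| ≤ ω amin x * |g t x| :=
        mul_le_mul_of_nonneg_right (hωmono ha₀l.le x) (abs_nonneg _)
      calc ω a₀ x * u t x ≤ ω a₀ x * (|g t x| + |f t x|) :=
            mul_le_mul_of_nonneg_left h2 (hωpos _ _).le
        _ = ω a₀ x * |g t x| + ω a₀ x * |f t x| := mul_add _ _ _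
        _ ≤ ω amin x * |g t x| + ω a₀ x * |f t x| := by linarith
    refine le_trans (ENNReal.tsum_le_tsum h1) ?_
    rw [ENNReal.tsum_add,
      ← ENNReal.ofReal_tsum_of_nonneg
        (fun y => mul_nonneg (hωpos _ _).le (abs_nonneg _)) (hgmem t ht),
      ← ENNReal.ofReal_tsum_of_nonneg
        (fun y => mul_nonneg (hωpos _ _).le (abs_nonneg _)) (hfmem a₀ ha₀l ha₀u t ht),
      ← ENNReal.ofReal_add
        (tsum_nonneg fun y => mul_nonneg (hωpos _ _).le (abs_nonneg _))
        (tsum_nonneg fun y => mul_nonneg (hωpos _ _).le (abs_nonneg _))]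
    exact ENNReal.ofReal_le_ofReal (add_le_add (hMg t ht) (hMf t ht))
  -- iterated bound
  set Δ : ℝ := a₁ - a₀ with hΔdef
  have hΔ : 0 < Δ := by simp only [hΔdef]; linarith
  have hind : ∀ n : ℕ, 0 < n → ∀ k : ℕ, k ≤ n → ∀ t ∈ Icc (0:ℝ) T,
      Fa (a₀ + k * (Δ / n)) t
        ≤ ENNReal.ofReal ((Mg + Mf) * (L / (Δ / n) ^ q) ^ k * t ^ k / k.factorial) := by
    intro n hn k
    induction k with
    | zero =>
      intro _ t ht
      simpa using hbase t ht
    | succ k ih =>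
      intro hk t ht
      have hnn : (0:ℝ) < (n:ℝ) := by exact_mod_cast hn
      have hδ : (0:ℝ) < Δ / n := div_pos hΔ hnn
      have hk' : k ≤ n := le_trans (Nat.le_succ k) hk
      have hα : a₀ ≤ a₀ + (k:ℝ) * (Δ / n) :=
        le_add_of_nonneg_right (mul_nonneg (Nat.cast_nonneg k) hδ.le)
      have hαβ : a₀ + (k:ℝ) * (Δ / n) < a₀ + ((k+1:ℕ):ℝ) * (Δ / n) := by
        push_cast
        nlinarith
      have hβ : a₀ + ((k+1:ℕ):ℝ) * (Δ / n) ≤ a₁ := by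
        have hcast : ((k+1:ℕ):ℝ) ≤ (n:ℝ) := by exact_mod_cast hk
        have h7 : ((k+1:ℕ):ℝ) * (Δ / n) ≤ (n:ℝ) * (Δ / n) :=
          mul_le_mul_of_nonneg_right hcast hδ.le
        have h8 : (n:ℝ) * (Δ / n) = Δ := by field_simp
        simp only [hΔdef] at h8 ⊢
        linarith
      have hstep := hB _ _ hα hαβ hβ t ht
      have hdiff : (a₀ + ((k+1:ℕ):ℝ) * (Δ / n)) - (a₀ + (k:ℝ) * (Δ / n)) = Δ / n := by
        push_cast
        ring
      rw [hdiff] at hstep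
      refine le_trans hstep ?_
      have hmono2 : (∫⁻ s in Ioc (0:ℝ) t, Fa (a₀ + (k:ℝ) * (Δ/n)) s)
          ≤ ∫⁻ s in Ioc (0:ℝ) t,
              ENNReal.ofReal ((Mg+Mf) * (L / (Δ/n)^q)^k * s^k / k.factorial) := by
        refine lintegral_mono_ae ?_
        filter_upwards [ae_restrict_mem measurableSet_Ioc] with s hs
        exact ih hk' s (hIocsub ht hs)
      refine le_trans (mul_le_mul_right hmono2 _) ?_
      have hA0 : (0:ℝ) ≤ L / (Δ/(n:ℝ))^q := div_nonneg hL.le (Real.rpow_nonneg hδ.le q)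
      have hint2 : (∫⁻ s in Ioc (0:ℝ) t,
            ENNReal.ofReal ((Mg+Mf) * (L/(Δ/n)^q)^k * s^k / k.factorial))
          = ENNReal.ofReal ((Mg+Mf) * (L/(Δ/n)^q)^k * (t^(k+1)/(k+1)) / k.factorial) := by
        rw [← ofReal_integral_eq_lintegral_ofReal]
        · congr 1
          have he : ∀ s : ℝ, (Mg+Mf) * (L/(Δ/(n:ℝ))^q)^k * s^k / k.factorial
              = ((Mg+Mf)*(L/(Δ/(n:ℝ))^q)^k / k.factorial) * s^k := fun s => by ring
          simp_rw [he]
          rw [integral_const_mul, ← intervalIntegral.integral_of_le ht.1, integral_pow]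
          push_cast
          ring
        · exact (((continuous_const.mul (continuous_pow k)).div_const _).integrableOn_Ioc)
        · filter_upwards [ae_restrict_mem measurableSet_Ioc] with s hs
          have hs0 : (0:ℝ) ≤ s := hs.1.le
          have h9 : (0:ℝ) ≤ (Mg+Mf) := by linarith
          positivity
      rw [hint2, ← ENNReal.ofReal_mul hA0]
      refine ENNReal.ofReal_le_ofReal (le_of_eq ?_)
      rw [Nat.factorial_succ]
      have hfk : (0:ℝ) < (k.factorial : ℝ) := by exact_mod_cast k.factorial_pos
      have hpq : (Δ/(n:ℝ))^q ≠ 0 := (Real.rpow_pos_of_pos hδ q).ne'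
      generalize L / (Δ/(n:ℝ))^q = A
      push_cast
      field_simp
      ring
  -- conclusion
  intro x t ht
  have hkey : ∀ n : ℕ, 0 < n → ENNReal.ofReal (ω a₁ x * u t x)
      ≤ ENNReal.ofReal ((Mg + Mf) * (L / (Δ / n) ^ q) ^ n * T ^ n / n.factorial) := by
    intro n hn
    have hnn : (0:ℝ) < (n:ℝ) := by exact_mod_cast hn
    have hea : a₀ + (n:ℝ) * (Δ / n) = a₁ := by
      have : (n:ℝ) * (Δ / n) = Δ := by field_simp
      simp only [hΔdef] at this ⊢
      linarith
    have h1 := hind n hn n le_rfl t ht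
    rw [hea] at h1
    have h2 : ENNReal.ofReal (ω a₁ x * u t x) ≤ Fa a₁ t := ENNReal.le_tsum x
    refine le_trans (le_trans h2 h1) (ENNReal.ofReal_le_ofReal ?_)
    have hA0 : (0:ℝ) ≤ L / (Δ/(n:ℝ))^q :=
      div_nonneg hL.le (Real.rpow_nonneg (div_pos hΔ hnn).le q)
    have htn : t^n ≤ T^n := pow_le_pow_left₀ ht.1 ht.2 n
    have hfk : (0:ℝ) < (n.factorial : ℝ) := by exact_mod_cast n.factorial_pos
    have h9 : (0:ℝ) ≤ (Mg+Mf) := by linarith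
    gcongr
  have hc0 : Tendsto (fun n : ℕ =>
      (Mg + Mf) * (L / (Δ / n) ^ q) ^ n * T ^ n / n.factorial) atTop (nhds 0) :=
    ovs_tendsto_zero_aux (Mg + Mf) L T Δ q (by linarith) hL hT hΔ hq0 hq1
  have hle0 : ω a₁ x * u t x ≤ 0 := by
    have h3 : ∀ᶠ n : ℕ in atTop, ω a₁ x * u t x
        ≤ (Mg + Mf) * (L / (Δ / n) ^ q) ^ n * T ^ n / n.factorial := by
      filter_upwards [eventually_gt_atTop 0] with n hn
      have := hkey n hn
      have hc : (0:ℝ) ≤ (Mg + Mf) * (L / (Δ / n) ^ q) ^ n * T ^ n / n.factorial := by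
        have hnn : (0:ℝ) < (n:ℝ) := by exact_mod_cast hn
        have hA0 : (0:ℝ) ≤ L / (Δ/(n:ℝ))^q :=
          div_nonneg hL.le (Real.rpow_nonneg (div_pos hΔ hnn).le q)
        exact div_nonneg (mul_nonneg (mul_nonneg (by linarith) (pow_nonneg hA0 n))
          (pow_nonneg hT0 n)) (Nat.cast_nonneg _)
      exact (ENNReal.ofReal_le_ofReal_iff hc).1 this
    exact ge_of_tendsto hc0 h3
  have hu00 : u t x ≤ 0 := by
    have := hωpos a₁ x
    nlinarith
  have : g t x - f t x ≤ 0 := le_trans (le_max_left _ _) hu00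
  linarith
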